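/- For every integer n ≥ 1, the greatest common divisor of the binomial coefficients C(n+1, j) for 1 ≤ j ≤ n equals a prime a if n+1 is a power of a, and equals 1 otherwise. Consequently, if an odd integer p > 2 divides n+1 but n+1 and p are not powers of a common odd prime, then there exists 2 ≤ j ≤ n−1 such that p does not divide C(n+1, j). -/

import Mathlib

open Nat

private lemma lucas_pow_aux {q : ℕ} (hq : q.Prime) (b t : ℕ) :
    ((q ^ b * t).choose (q ^ b)) ≡ t [MOD q] := by
  haveI : Fact q.Prime := ⟨hq⟩
  induction b with
  | zero => simp [Nat.ModEq.refl]
  | succ b ih =>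
    have h := Choose.choose_modEq_choose_mod_mul_choose_div_nat
      (n := q ^ (b + 1) * t) (k := q ^ (b + 1)) (p := q)
    have e1 : q ^ (b + 1) * t = q * (q ^ b * t) := by ring
    have e2 : q ^ (b + 1) = q * q ^ b := by ring
    rw [e1, e2, Nat.mul_mod_right, Nat.mul_mod_right,
      Nat.mul_div_cancel_left _ hq.pos, Nat.mul_div_cancel_left _ hq.pos] at h
    rw [e1, e2]
    exact h.trans (by simpa using ih)

private lemma not_sq_dvd_choose {a k : ℕ} (ha : a.Prime) (hk : 1 ≤ k) :
    ¬ a ^ 2 ∣ (a ^ k).choose (a ^ (k - 1)) := by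
  have hle : a ^ (k - 1) ≤ a ^ k := Nat.pow_le_pow_right ha.pos (by omega)
  have hne : a ^ (k - 1) ≠ 0 := (Nat.pow_pos ha.pos).ne'
  have h := ha.emultiplicity_choose_prime_pow hle hne
  rw [multiplicity_pow_self_of_prime ha.prime] at h
  have hkk : k - (k - 1) = 1 := by omega
  rw [hkk] at h
  intro hcon
  rw [pow_dvd_iff_le_emultiplicity, h] at hcon
  norm_num at hcon

theorem gcd_central_binomials (n : ℕ) (hn : 1 ≤ n) :
    (∀ a : ℕ, a.Prime → (∃ k : ℕ, n + 1 = a ^ k) →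
      (Finset.Icc 1 n).gcd (fun j => (n + 1).choose j) = a) ∧
    ((¬ ∃ a : ℕ, a.Prime ∧ ∃ k : ℕ, n + 1 = a ^ k) →
      (Finset.Icc 1 n).gcd (fun j => (n + 1).choose j) = 1) ∧
    (∀ p : ℕ, 2 < p → Odd p → p ∣ n + 1 →
      (¬ ∃ a : ℕ, a.Prime ∧ Odd a ∧ (∃ i : ℕ, n + 1 = a ^ i) ∧ (∃ j : ℕ, p = a ^ j)) →
      ∃ j : ℕ, 2 ≤ j ∧ j ≤ n - 1 ∧ ¬ p ∣ (n + 1).choose j) := by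
  set g := (Finset.Icc 1 n).gcd (fun j => (n + 1).choose j) with hg
  have h1mem : (1 : ℕ) ∈ Finset.Icc 1 n := Finset.mem_Icc.mpr ⟨le_refl 1, hn⟩
  have hgm : g ∣ n + 1 := by
    have := Finset.gcd_dvd h1mem (f := fun j => (n + 1).choose j)
    simpa using this
  -- Part 1
  have part1 : ∀ a : ℕ, a.Prime → (∃ k : ℕ, n + 1 = a ^ k) → g = a := by
    rintro a ha ⟨k, hk⟩
    have hk1 : 1 ≤ k := by
      rcases Nat.eq_zero_or_pos k with h | h
      · subst h; simp at hk; omega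
      · exact h
    have hag : a ∣ g := by
      apply Finset.dvd_gcd
      intro j hj
      rw [Finset.mem_Icc] at hj
      rw [hk]
      exact Nat.Prime.dvd_choose_pow ha (by omega) (by omega)
    have hga : g ∣ a ^ k := hk ▸ hgm
    obtain ⟨e, he, hge⟩ := (Nat.dvd_prime_pow ha).mp hga
    have hmem2 : a ^ (k - 1) ∈ Finset.Icc 1 n := by
      rw [Finset.mem_Icc]
      constructor
      · exact Nat.one_le_pow _ _ ha.pos
      · have : a ^ (k - 1) < a ^ k := Nat.pow_lt_pow_right ha.one_lt (by omega)
        omega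
    have hgC : g ∣ (n + 1).choose (a ^ (k - 1)) :=
      Finset.gcd_dvd hmem2 (f := fun j => (n + 1).choose j)
    have hnsq : ¬ a ^ 2 ∣ g := fun hsq =>
      not_sq_dvd_choose ha hk1 (hk ▸ hsq.trans hgC)
    have he1 : e = 1 := by
      rcases Nat.lt_or_ge e 1 with h | h
      · interval_cases e
        simp at hge
        rw [hge] at hag
        exact absurd (Nat.le_of_dvd one_pos hag) (by have := ha.two_le; omega)
      · rcases Nat.lt_or_ge e 2 with h2 | h2
        · omega
        · exact absurd (hge ▸ pow_dvd_pow a h2) hnsq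
    rw [hge, he1, pow_one]
  -- key lemma: for each prime q with positive exponent and n+1 not a power of q,
  -- q does not divide g
  have key : ∀ q : ℕ, q.Prime → q ∣ n + 1 → n + 1 ≠ q ^ ((n + 1).factorization q) →
      ¬ q ∣ g := by
    intro q hq hqm hne hdvd
    set a := (n + 1).factorization q with ha
    have hm0 : n + 1 ≠ 0 := by omega
    have hproj : q ^ a ∣ n + 1 := Nat.ordProj_dvd _ _
    have hpos : 0 < a := hq.factorization_pos_of_dvd hm0 hqm
    have hcompl : ¬ q ∣ (n + 1) / q ^ a := Nat.not_dvd_ordCompl hq hm0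
    have heq : q ^ a * ((n + 1) / q ^ a) = n + 1 := Nat.ordProj_mul_ordCompl_eq_self _ _
    have hmem : q ^ a ∈ Finset.Icc 1 n := by
      rw [Finset.mem_Icc]
      have hle : q ^ a ≤ n + 1 := Nat.le_of_dvd (by omega) hproj
      have : q ^ a ≠ n + 1 := fun h => hne h.symm
      exact ⟨Nat.one_le_pow _ _ hq.pos, by omega⟩
    have hgC : g ∣ (n + 1).choose (q ^ a) :=
      Finset.gcd_dvd hmem (f := fun j => (n + 1).choose j)
    have hqC : q ∣ (n + 1).choose (q ^ a) := hdvd.trans hgC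
    have hmod := lucas_pow_aux hq a ((n + 1) / q ^ a)
    rw [heq] at hmod
    have : q ∣ (n + 1) / q ^ a := by
      exact (Nat.modEq_zero_iff_dvd).mp ((hmod.symm).trans ((Nat.modEq_zero_iff_dvd).mpr hqC))
    exact hcompl this
  -- Part 2
  have part2 : (¬ ∃ a : ℕ, a.Prime ∧ ∃ k : ℕ, n + 1 = a ^ k) → g = 1 := by
    intro hno
    by_contra hg1
    obtain ⟨q, hq, hqg⟩ := Nat.exists_prime_and_dvd hg1
    have hqm : q ∣ n + 1 := hqg.trans hgm
    have hne : n + 1 ≠ q ^ ((n + 1).factorization q) := by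
      intro h
      exact hno ⟨q, hq, _, h⟩
    exact key q hq hqm hne hqg
  refine ⟨part1, part2, ?_⟩
  -- Part 3
  intro p hp2 hpodd hpm hno
  have hpg : ¬ p ∣ g := by
    by_cases hpp : ∃ a : ℕ, a.Prime ∧ ∃ k : ℕ, n + 1 = a ^ k
    · obtain ⟨a, ha, k, hk⟩ := hpp
      rw [part1 a ha ⟨k, hk⟩]
      intro hpa
      rcases (Nat.Prime.eq_one_or_self_of_dvd ha p hpa) with h | h
      · omega
      · exact hno ⟨a, ha, h ▸ hpodd, ⟨k, hk⟩, ⟨1, by rw [h, pow_one]⟩⟩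
    · rw [part2 hpp]
      intro h
      have := Nat.le_of_dvd one_pos h
      omega
  have : ∃ j ∈ Finset.Icc 1 n, ¬ p ∣ (n + 1).choose j := by
    by_contra hcon
    push_neg at hcon
    exact hpg (Finset.dvd_gcd hcon)
  obtain ⟨j, hj, hnd⟩ := this
  rw [Finset.mem_Icc] at hj
  have hj1 : j ≠ 1 := by
    intro h
    rw [h] at hnd
    simp only [Nat.choose_one_right] at hnd
    exact hnd hpm
  have hjn : j ≠ n := by
    intro h
    rw [h] at hnd
    have : (n + 1).choose n = n + 1 := by
      simp
    rw [this] at hnd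
    exact hnd hpm
  exact ⟨j, by omega, by omega, hnd⟩
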